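/- Let ρ > 0 and let f : ℝ → ℝ be twice continuously differentiable. Suppose that f is nonnegative and bounded on [1,∞) and satisfies f''(s) ≥ ρ² · f(s) for every s ≥ 1. Then f'(s) + ρ·f(s) ≤ 0 for every s ≥ 1. -/

import Mathlib

/-- If `f` is twice continuously differentiable, nonnegative and bounded on `[1, ∞)`, and
satisfies `f'' ≥ ρ² f` there with `ρ > 0`, then `f' + ρ f ≤ 0` on `[1, ∞)`. -/
theorem deriv_add_rho_mul_nonpos (ρ : ℝ) (hρ : 0 < ρ) (f : ℝ → ℝ) (hf : ContDiff ℝ 2 f)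
    (hnonneg : ∀ s, 1 ≤ s → 0 ≤ f s)
    (hbdd : ∃ M : ℝ, ∀ s, 1 ≤ s → |f s| ≤ M)
    (hineq : ∀ s, 1 ≤ s → ρ ^ 2 * f s ≤ deriv (deriv f) s) :
    ∀ s, 1 ≤ s → deriv f s + ρ * f s ≤ 0 := by
  obtain ⟨M, hM⟩ := hbdd
  have hM0 : 0 ≤ M := le_trans (abs_nonneg _) (hM 1 le_rfl)
  have hfd : Differentiable ℝ f := hf.differentiable (by norm_num)
  have hf' : ContDiff ℝ 1 (deriv f) := by
    have hf2 : ContDiff ℝ (1 + 1) f := by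
      rw [show ((1:WithTop ℕ∞) + 1) = 2 by norm_num]; exact hf
    exact (contDiff_succ_iff_deriv.mp hf2).2.2
  have hf'd : Differentiable ℝ (deriv f) := hf'.differentiable one_ne_zero
  -- the auxiliary function g
  set g : ℝ → ℝ := fun s => Real.exp (-ρ * s) * (deriv f s + ρ * f s) with hg_def
  have hg : ∀ s : ℝ, HasDerivAt g
      (Real.exp (-ρ * s) * (deriv (deriv f) s - ρ ^ 2 * f s)) s := by
    intro s
    have h1 : HasDerivAt (fun s : ℝ => Real.exp (-ρ * s))
        (Real.exp (-ρ * s) * (-ρ)) s := by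
      simpa using ((hasDerivAt_id s).const_mul (-ρ)).exp
    have h2 : HasDerivAt (fun s => deriv f s + ρ * f s)
        (deriv (deriv f) s + ρ * deriv f s) s :=
      ((hf'd s).hasDerivAt).add (((hfd s).hasDerivAt).const_mul ρ)
    have : HasDerivAt g _ s := h1.mul h2
    convert this using 1
    ring
  by_contra hcon
  push_neg at hcon
  obtain ⟨s₀, hs₀, hpos⟩ := hcon
  set c : ℝ := deriv f s₀ + ρ * f s₀ with hc_def
  have hc : 0 < c := hpos
  -- g is monotone on [s₀, ∞)
  have hmono : MonotoneOn g (Set.Ici s₀) := by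
    apply monotoneOn_of_deriv_nonneg (convex_Ici s₀)
    · exact fun x _ => ((hg x).differentiableAt.continuousAt).continuousWithinAt
    · exact fun x _ => (hg x).differentiableAt.differentiableWithinAt
    · intro x hx
      rw [interior_Ici] at hx
      rw [(hg x).deriv]
      have hx1 : 1 ≤ x := le_trans hs₀ (le_of_lt hx)
      have := hineq x hx1
      exact mul_nonneg (Real.exp_pos _).le (by linarith)
  -- exponential lower bound on f' + ρ f
  have key : ∀ s, s₀ ≤ s → c * Real.exp (ρ * (s - s₀)) ≤ deriv f s + ρ * f s := by
    intro s hs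
    have h1 : Real.exp (-ρ * s₀) * c ≤ Real.exp (-ρ * s) * (deriv f s + ρ * f s) :=
      hmono (Set.self_mem_Ici) hs hs
    have h2 := mul_le_mul_of_nonneg_left h1 (Real.exp_pos (ρ * s)).le
    have e1 : Real.exp (ρ * s) * Real.exp (-ρ * s₀) = Real.exp (ρ * (s - s₀)) := by
      rw [← Real.exp_add]; ring_nf
    have e2 : Real.exp (ρ * s) * Real.exp (-ρ * s) = 1 := by
      rw [← Real.exp_add]; ring_nf; exact Real.exp_zero
    calc c * Real.exp (ρ * (s - s₀))
        = Real.exp (ρ * s) * (Real.exp (-ρ * s₀) * c) := by rw [← e1]; ring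
      _ ≤ Real.exp (ρ * s) * (Real.exp (-ρ * s) * (deriv f s + ρ * f s)) := h2
      _ = (Real.exp (ρ * s) * Real.exp (-ρ * s)) * (deriv f s + ρ * f s) := by ring
      _ = deriv f s + ρ * f s := by rw [e2]; ring
  -- choose s₁ beyond which f' ≥ 1
  set t : ℝ := (ρ * M + 1) / (c * ρ) with ht_def
  have ht : 0 < t := div_pos (by linarith [mul_nonneg hρ.le hM0]) (mul_pos hc hρ)
  set s₁ : ℝ := s₀ + t with hs₁_def
  have hs₁ : s₀ ≤ s₁ := by linarith
  have hbig : ρ * M + 1 ≤ c * Real.exp (ρ * (s₁ - s₀)) := by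
    have hx : ρ * t ≤ Real.exp (ρ * t) := by
      have := Real.add_one_le_exp (ρ * t)
      linarith
    have : c * (ρ * t) ≤ c * Real.exp (ρ * t) :=
      mul_le_mul_of_nonneg_left hx hc.le
    have heq : c * (ρ * t) = ρ * M + 1 := by
      rw [ht_def]; field_simp
    have hs : s₁ - s₀ = t := by ring
    rw [hs]; linarith
  have hderiv1 : ∀ s, s₁ ≤ s → 1 ≤ deriv f s := by
    intro s hs
    have hs0 : s₀ ≤ s := le_trans hs₁ hs
    have hs1 : 1 ≤ s := le_trans hs₀ hs0
    have h1 := key s hs0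
    have h2 : Real.exp (ρ * (s₁ - s₀)) ≤ Real.exp (ρ * (s - s₀)) := by
      apply Real.exp_le_exp.mpr
      have : s₁ - s₀ ≤ s - s₀ := by linarith
      exact mul_le_mul_of_nonneg_left this hρ.le
    have h3 : c * Real.exp (ρ * (s₁ - s₀)) ≤ c * Real.exp (ρ * (s - s₀)) :=
      mul_le_mul_of_nonneg_left h2 hc.le
    have hfs : f s ≤ M := le_trans (le_abs_self _) (hM s hs1)
    have hρf : ρ * f s ≤ ρ * M := mul_le_mul_of_nonneg_left hfs hρ.le
    linarith
  -- f grows at least linearly beyond s₁, contradiction with boundedness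
  have hmonoF : MonotoneOn (fun s => f s - s) (Set.Ici s₁) := by
    apply monotoneOn_of_deriv_nonneg (convex_Ici s₁)
    · exact (hfd.continuous.sub continuous_id).continuousOn
    · exact fun x _ => ((hfd x).sub (differentiable_id x)).differentiableWithinAt
    · intro x hx
      rw [interior_Ici] at hx
      have hd : HasDerivAt (fun s => f s - s) (deriv f x - 1) x :=
        (hfd x).hasDerivAt.sub (hasDerivAt_id x)
      rw [hd.deriv]
      linarith [hderiv1 x hx.le]
  set s₂ : ℝ := s₁ + (2 * M + 1) with hs₂_def
  have hs₂ : s₁ ≤ s₂ := by linarith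
  have hF := hmonoF Set.self_mem_Ici hs₂ hs₂
  simp only at hF
  have h1s₁ : (1 : ℝ) ≤ s₁ := le_trans hs₀ hs₁
  have h1s₂ : (1 : ℝ) ≤ s₂ := le_trans h1s₁ hs₂
  have hfs₁ : -M ≤ f s₁ := neg_le_of_abs_le (hM s₁ h1s₁)
  have hfs₂ : f s₂ ≤ M := le_trans (le_abs_self _) (hM s₂ h1s₂)
  have : f s₁ - s₁ ≤ f s₂ - s₂ := hF
  rw [hs₂_def] at this
  linarith
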